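/- Let F_N have difference dimension d with characteristic polynomial P(z), and d < L ≤ N − d + 1. A vector B = (b_0,…,b_{L-1})^T belongs to the relations space ℜ^{(L)}(F_N) if and only if its generating polynomial B(z) = b_{L-1}z^{L-1} + … + b_1 z + b_0 is a polynomial multiple of P(z). -/
import Mathlib


open Polynomial Finset

/-- Trajectory space: span of lagged vectors of the first `N` values of `f`. -/
noncomputable def trajSpace (f : ℕ → ℂ) (N L : ℕ) : Submodule ℂ (Fin L → ℂ) :=
  Submodule.span ℂ {v : Fin L → ℂ | ∃ i : ℕ, i + L ≤ N ∧ v = fun j : Fin L => f (i + (j : ℕ))}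

/-- The Hermitian inner product on `Fin L → ℂ`. -/
noncomputable def hinner {L : ℕ} (u v : Fin L → ℂ) : ℂ :=
  ∑ i, (starRingEnd ℂ) (u i) * v i

/-- Membership in the relations space: the componentwise conjugate lies in the
orthogonal complement of the trajectory space. -/
def inRelSpace (f : ℕ → ℂ) (N L : ℕ) (v : Fin L → ℂ) : Prop :=
  ∀ u ∈ trajSpace f N L, hinner u (fun i => (starRingEnd ℂ) (v i)) = 0

noncomputable def Sop : Module.End ℂ (ℕ → ℂ) :=
  { toFun := fun g n => g (n + 1)
    map_add' := fun g h => rfl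
    map_smul' := fun c g => rfl }

noncomputable def pact (A : Polynomial ℂ) : Module.End ℂ (ℕ → ℂ) :=
  Polynomial.aeval Sop A

noncomputable def expP (p : Polynomial ℂ) (l : ℂ) : ℕ → ℂ := fun n => p.eval (n : ℂ) * l ^ n

lemma Sop_pow_apply (j : ℕ) (g : ℕ → ℂ) (n : ℕ) : (Sop ^ j) g n = g (n + j) := by
  induction j generalizing g n with
  | zero => rfl
  | succ j ih =>
    rw [pow_succ]
    show (Sop ^ j) (Sop g) n = _
    rw [ih]
    show g (n + j + 1) = _
    ring_nf

lemma pact_apply (A : Polynomial ℂ) (g : ℕ → ℂ) (n : ℕ) :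
    pact A g n = ∑ j ∈ Finset.range (A.natDegree + 1), A.coeff j * g (n + j) := by
  rw [pact, Polynomial.aeval_eq_sum_range]
  rw [LinearMap.coe_sum, Finset.sum_apply, Finset.sum_apply]
  refine Finset.sum_congr rfl fun j _ => ?_
  rw [LinearMap.smul_apply]
  show A.coeff j * (Sop ^ j) g n = _
  rw [Sop_pow_apply]

lemma pact_mul_apply (A B : Polynomial ℂ) (g : ℕ → ℂ) :
    pact (A * B) g = pact A (pact B g) := by
  rw [pact, pact, pact, map_mul]; rfl

lemma expP_zero (l : ℂ) : expP 0 l = 0 := by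
  funext n; simp [expP]

lemma expP_inj {l : ℂ} (hl : l ≠ 0) {p q : Polynomial ℂ} (h : expP p l = expP q l) :
    p = q := by
  have h2 : ∀ n : ℕ, (p - q).IsRoot (n : ℂ) := by
    intro n
    have := congrFun h n
    simp only [expP] at this
    have hln : l ^ n ≠ 0 := pow_ne_zero _ hl
    have : p.eval (n : ℂ) = q.eval (n : ℂ) := by
      field_simp at this
      tauto
    simp [IsRoot, this]
  have hinf : Set.Infinite { x : ℂ | (p - q).IsRoot x } := by
    apply Set.Infinite.mono (s := Set.range (Nat.cast : ℕ → ℂ))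
    · rintro x ⟨n, rfl⟩; exact h2 n
    · exact Set.infinite_range_of_injective Nat.cast_injective
  exact sub_eq_zero.mp (Polynomial.eq_zero_of_infinite_isRoot _ hinf)

lemma pact_X_sub_C (μ l : ℂ) (p : Polynomial ℂ) :
    pact (X - C μ) (expP p l) = expP (C l * taylor 1 p - C μ * p) l := by
  funext n
  have : pact (X - C μ) (expP p l) n = expP p l (n + 1) - μ * expP p l n := by
    rw [pact, map_sub, LinearMap.sub_apply, Polynomial.aeval_X, Polynomial.aeval_C]
    rfl
  rw [this]
  simp only [expP, eval_sub, eval_mul, eval_C, taylor_eval]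
  push_cast
  ring

lemma taylor_lc (r : ℂ) (p : Polynomial ℂ) : (taylor r p).leadingCoeff = p.leadingCoeff := by
  rw [taylor_apply, Polynomial.leadingCoeff_comp (by simp [natDegree_X_add_C])]
  simp [leadingCoeff_X_add_C]

lemma taylor_coeff_natDegree' (r : ℂ) (p : Polynomial ℂ) :
    (taylor r p).coeff p.natDegree = p.leadingCoeff := by
  rw [← natDegree_taylor p r, coeff_natDegree, taylor_lc]

lemma taylor_ne_zero' (r : ℂ) {p : Polynomial ℂ} (hp : p ≠ 0) : taylor r p ≠ 0 := by
  intro h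
  exact hp (Polynomial.taylor_injective r (by simpa using h))

lemma delta_natDegree_lt {p : Polynomial ℂ} (hd : 1 ≤ p.natDegree) :
    (taylor 1 p - p).degree < p.degree := by
  have hp : p ≠ 0 := fun h => by simp [h] at hd
  have htz : taylor 1 p ≠ 0 := taylor_ne_zero' 1 hp
  have hdeg : (taylor 1 p).degree = p.degree := by
    rw [Polynomial.degree_eq_natDegree htz, Polynomial.degree_eq_natDegree hp, natDegree_taylor]
  exact hdeg ▸ Polynomial.degree_sub_lt hdeg htz (taylor_lc 1 p)

lemma delta_coeff_pred {p : Polynomial ℂ} (hd : 1 ≤ p.natDegree) :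
    (taylor 1 p - p).coeff (p.natDegree - 1) = p.natDegree * p.leadingCoeff := by
  set d := p.natDegree with hdd
  have h1 : (taylor 1 p).coeff (d - 1) = (hasseDeriv (d - 1) p).eval 1 := by
    rw [Polynomial.taylor_coeff]
  have hnd : (hasseDeriv (d - 1) p).natDegree < 2 := by
    have := Polynomial.natDegree_hasseDeriv_le p (d - 1)
    omega
  have h2 : (hasseDeriv (d - 1) p).eval 1 =
      (hasseDeriv (d - 1) p).coeff 0 + (hasseDeriv (d - 1) p).coeff 1 := by
    rw [Polynomial.eval_eq_sum_range' hnd]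
    simp [Finset.sum_range_succ]
  have h3 : (hasseDeriv (d - 1) p).coeff 0 = p.coeff (d - 1) := by
    rw [Polynomial.hasseDeriv_coeff]
    simp
  have h4 : (hasseDeriv (d - 1) p).coeff 1 = d * p.leadingCoeff := by
    rw [Polynomial.hasseDeriv_coeff]
    have : 1 + (d - 1) = d := by omega
    rw [this]
    have : d.choose (d - 1) = d := by
      have h5 : d = (d - 1) + 1 := by omega
      conv_lhs => rw [h5]
      rw [Nat.succ_sub_one, Nat.choose_succ_self_right]
      omega
    rw [this, coeff_natDegree]
  rw [coeff_sub, h1, h2, h3, h4]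
  ring

/-- One step with `μ = l` simplifies. -/
lemma pact_X_sub_C_self (l : ℂ) (p : Polynomial ℂ) :
    pact (X - C l) (expP p l) = expP (C l * (taylor 1 p - p)) l := by
  rw [pact_X_sub_C, mul_sub]

lemma annihilate (l : ℂ) : ∀ (m : ℕ) (p : Polynomial ℂ), p.natDegree ≤ m →
    pact ((X - C l) ^ (m + 1)) (expP p l) = 0 := by
  intro m
  induction m with
  | zero =>
    intro p hp
    rw [pow_one, pact_X_sub_C_self]
    have : p = C (p.coeff 0) := Polynomial.eq_C_of_natDegree_le_zero hp
    rw [this, taylor_C, sub_self, mul_zero, expP_zero]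
  | succ m ih =>
    intro p hp
    rw [pow_succ, pact_mul_apply, pact_X_sub_C_self]
    apply ih
    refine le_trans (Polynomial.natDegree_C_mul_le _ _) ?_
    rcases Nat.eq_zero_or_pos p.natDegree with h0 | h1
    · have : p = C (p.coeff 0) := Polynomial.eq_C_of_natDegree_le_zero h0.le
      rw [this, taylor_C, sub_self, natDegree_zero]
      omega
    · rcases eq_or_ne (taylor 1 p - p) 0 with hz | hz
      · rw [hz, natDegree_zero]; omega
      · have := delta_natDegree_lt h1
        have hlt := Polynomial.natDegree_lt_natDegree hz this
        omega

lemma step_deg_lc {l μ : ℂ} (hμ : μ ≠ l) (p : Polynomial ℂ) :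
    (C l * taylor 1 p - C μ * p).natDegree = p.natDegree ∧
      (C l * taylor 1 p - C μ * p).leadingCoeff = (l - μ) * p.leadingCoeff := by
  rcases eq_or_ne p 0 with rfl | hp
  · simp
  set d := p.natDegree with hdd
  have hc : (C l * taylor 1 p - C μ * p).coeff d = (l - μ) * p.leadingCoeff := by
    rw [coeff_sub, coeff_C_mul, coeff_C_mul, taylor_coeff_natDegree', coeff_natDegree]
    ring
  have hcne : (C l * taylor 1 p - C μ * p).coeff d ≠ 0 := by
    rw [hc]
    exact mul_ne_zero (sub_ne_zero.mpr (Ne.symm hμ)) (leadingCoeff_ne_zero.mpr hp)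
  have hle : (C l * taylor 1 p - C μ * p).natDegree ≤ d := by
    refine le_trans (Polynomial.natDegree_sub_le _ _) ?_
    refine max_le (le_trans (Polynomial.natDegree_C_mul_le _ _) ?_)
      (le_trans (Polynomial.natDegree_C_mul_le _ _) le_rfl)
    rw [natDegree_taylor]
  have heq : (C l * taylor 1 p - C μ * p).natDegree = d :=
    le_antisymm hle (Polynomial.le_natDegree_of_ne_zero hcne)
  exact ⟨heq, by rw [Polynomial.leadingCoeff, heq, hc]⟩

/-- Applying `(X - C μ) ^ t` with `μ ≠ l` preserves degree and scales the leading coeff. -/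
lemma pow_transform (l μ : ℂ) (hμ : μ ≠ l) : ∀ (t : ℕ) (p : Polynomial ℂ),
    ∃ r : Polynomial ℂ, pact ((X - C μ) ^ t) (expP p l) = expP r l ∧
      r.natDegree = p.natDegree ∧ r.leadingCoeff = (l - μ) ^ t * p.leadingCoeff := by
  intro t
  induction t with
  | zero =>
    intro p
    exact ⟨p, by rw [pow_zero, pact, map_one, Module.End.one_apply], rfl, by rw [pow_zero, one_mul]⟩
  | succ t ih =>
    intro p
    obtain ⟨r, hr, hdeg, hlc⟩ := ih (C l * taylor 1 p - C μ * p)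
    obtain ⟨h1, h2⟩ := step_deg_lc hμ p
    refine ⟨r, ?_, by rw [hdeg, h1], ?_⟩
    · rw [pow_succ, pact_mul_apply, pact_X_sub_C, hr]
    · rw [hlc, h2, pow_succ]
      ring

lemma prod_transform {m : ℕ} (lam : Fin m → ℂ) (t : Fin m → ℕ) (l : ℂ) (s : Finset (Fin m))
    (hs : ∀ k ∈ s, lam k ≠ l) (p : Polynomial ℂ) :
    ∃ r : Polynomial ℂ, pact (∏ k ∈ s, (X - C (lam k)) ^ t k) (expP p l) = expP r l ∧
      r.natDegree = p.natDegree ∧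
      r.leadingCoeff = (∏ k ∈ s, (l - lam k) ^ t k) * p.leadingCoeff := by
  classical
  induction s using Finset.induction_on with
  | empty =>
    exact ⟨p, by rw [Finset.prod_empty, pact, map_one, Module.End.one_apply], rfl,
      by rw [Finset.prod_empty, one_mul]⟩
  | @insert a s ha ih =>
    obtain ⟨r', hr', hd', hl'⟩ := ih (fun k hk => hs k (Finset.mem_insert_of_mem hk))
    obtain ⟨r, hr, hd, hl⟩ := pow_transform l (lam a) (hs a (Finset.mem_insert_self a s)) (t a) r'
    refine ⟨r, ?_, by rw [hd, hd'], ?_⟩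
    · rw [Finset.prod_insert ha, pact_mul_apply, hr', hr]
    · rw [hl, hl', Finset.prod_insert ha]
      ring

lemma exp_unique {m : ℕ} (lam : Fin m → ℂ) (hinj : Function.Injective lam)
    (hne : ∀ k, lam k ≠ 0) (q : Fin m → Polynomial ℂ)
    (h : ∀ n : ℕ, ∑ k, (q k).eval (n : ℂ) * lam k ^ n = 0) : ∀ k, q k = 0 := by
  classical
  intro k0
  by_contra hq
  have hg : (∑ k, expP (q k) (lam k)) = (0 : ℕ → ℂ) := by
    funext n
    simpa [expP, Finset.sum_apply] using h n
  set A := ∏ k ∈ Finset.univ.erase k0, (X - C (lam k)) ^ ((q k).natDegree + 1) with hA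
  have h0 : ∑ k, pact A (expP (q k) (lam k)) = 0 := by
    rw [← map_sum, hg, map_zero]
  have hzero : ∀ k ∈ Finset.univ (α := Fin m), k ≠ k0 → pact A (expP (q k) (lam k)) = 0 := by
    intro k _ hk
    have hmem : k ∈ Finset.univ.erase k0 := Finset.mem_erase.mpr ⟨hk, Finset.mem_univ k⟩
    have : (∏ x ∈ (Finset.univ.erase k0).erase k, (X - C (lam x)) ^ ((q x).natDegree + 1)) *
        (X - C (lam k)) ^ ((q k).natDegree + 1) = A := Finset.prod_erase_mul _ _ hmem
    rw [← this, pact_mul_apply, annihilate (lam k) _ (q k) le_rfl, map_zero]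
  have hsum := Finset.sum_eq_single_of_mem k0 (Finset.mem_univ k0) hzero
  rw [hsum] at h0
  obtain ⟨r, hr, _, hl⟩ := prod_transform lam (fun k => (q k).natDegree + 1) (lam k0)
    (Finset.univ.erase k0)
    (fun k hk => fun he => (Finset.mem_erase.mp hk).1 (hinj he)) (q k0)
  rw [hr] at h0
  have hr0 : r = 0 := expP_inj (hne k0) (by rw [h0, ← expP_zero (lam k0)])
  rw [hr0, leadingCoeff_zero] at hl
  have : (∏ k ∈ Finset.univ.erase k0, (lam k0 - lam k) ^ ((q k).natDegree + 1)) *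
      (q k0).leadingCoeff ≠ 0 := by
    apply mul_ne_zero
    · apply Finset.prod_ne_zero_iff.mpr
      intro k hk
      exact pow_ne_zero _ (sub_ne_zero.mpr fun he => (Finset.mem_erase.mp hk).1 (hinj he.symm))
    · exact leadingCoeff_ne_zero.mpr hq
  exact this hl.symm

noncomputable def Tr (l : ℂ) (R p : Polynomial ℂ) : Polynomial ℂ :=
  ∑ j ∈ Finset.range (R.natDegree + 1), C (R.coeff j * l ^ j) * taylor (j : ℂ) p

lemma pact_exp (l : ℂ) (R p : Polynomial ℂ) :
    pact R (expP p l) = expP (Tr l R p) l := by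
  funext n
  rw [pact_apply, expP, Tr, eval_finset_sum]
  rw [Finset.sum_mul]
  refine Finset.sum_congr rfl fun j _ => ?_
  rw [eval_mul, eval_C, taylor_eval]
  show R.coeff j * expP p l (n + j) = _
  rw [expP]
  push_cast
  rw [pow_add]
  ring

lemma eval_eq_zero_of_pact_exp_zero {l : ℂ} (hl : l ≠ 0) {p R : Polynomial ℂ} (hp : p ≠ 0)
    (h : pact R (expP p l) = 0) : R.eval l = 0 := by
  have hTr : Tr l R p = 0 := by
    apply expP_inj hl
    rw [← pact_exp, h, expP_zero]
  have hc : (Tr l R p).coeff p.natDegree = R.eval l * p.leadingCoeff := by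
    rw [Tr, Polynomial.finset_sum_coeff]
    rw [Polynomial.eval_eq_sum_range, Finset.sum_mul]
    refine Finset.sum_congr rfl fun j _ => ?_
    rw [coeff_C_mul, taylor_coeff_natDegree']
  rw [hTr, coeff_zero] at hc
  have := leadingCoeff_ne_zero.mpr hp
  rcases mul_eq_zero.mp hc.symm with h1 | h2
  · exact h1
  · exact absurd h2 this

lemma dvd_of_pact_exp_zero {l : ℂ} (hl : l ≠ 0) :
    ∀ dd : ℕ, ∀ p R : Polynomial ℂ, p ≠ 0 → p.natDegree = dd →
      pact R (expP p l) = 0 → (X - C l) ^ (dd + 1) ∣ R := by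
  intro dd
  induction dd using Nat.strong_induction_on with
  | _ dd ih =>
    intro p R hp hdeg h
    have heval := eval_eq_zero_of_pact_exp_zero hl hp h
    obtain ⟨R', hR'⟩ := (Polynomial.dvd_iff_isRoot).mpr heval
    rcases Nat.eq_zero_or_pos dd with h0 | h1
    · subst h0
      rw [pow_one]
      exact ⟨R', hR'⟩
    · -- dd ≥ 1
      have hd1 : 1 ≤ p.natDegree := hdeg ▸ h1
      set Δ := taylor 1 p - p with hΔdef
      have hcΔ : Δ.coeff (p.natDegree - 1) = p.natDegree * p.leadingCoeff := delta_coeff_pred hd1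
      have hΔne : Δ ≠ 0 := by
        intro hz
        rw [hz, coeff_zero] at hcΔ
        have : (p.natDegree : ℂ) ≠ 0 := Nat.cast_ne_zero.mpr (by omega)
        exact mul_ne_zero this (leadingCoeff_ne_zero.mpr hp) hcΔ.symm
      have hΔlt : Δ.natDegree < p.natDegree :=
        Polynomial.natDegree_lt_natDegree hΔne (delta_natDegree_lt hd1)
      have hΔge : p.natDegree - 1 ≤ Δ.natDegree := by
        apply Polynomial.le_natDegree_of_ne_zero
        rw [hcΔ]
        exact mul_ne_zero (Nat.cast_ne_zero.mpr (by omega)) (leadingCoeff_ne_zero.mpr hp)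
      set p₁ := C l * Δ with hp₁def
      have hp₁ne : p₁ ≠ 0 := mul_ne_zero (by simpa using hl) hΔne
      have hp₁deg : p₁.natDegree = dd - 1 := by
        rw [hp₁def, Polynomial.natDegree_C_mul hl]
        omega
      have hstep : pact R' (expP p₁ l) = 0 := by
        have : R = R' * (X - C l) := by rw [hR']; ring
        rw [this, pact_mul_apply, pact_X_sub_C_self] at h
        exact h
      have hdvd := ih (dd - 1) (by omega) p₁ R' hp₁ne hp₁deg hstep
      have : (X - C l) ^ (dd + 1) = (X - C l) * (X - C l) ^ (dd - 1 + 1) := by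
        rw [← pow_succ']
        congr 1
        omega
      rw [this, hR']
      exact mul_dvd_mul_left _ hdvd

lemma vanish_of_monic_ann {Q : Polynomial ℂ} (hQm : Q.Monic) {g : ℕ → ℂ}
    (hg : pact Q g = 0) (h0 : ∀ i, i < Q.natDegree → g i = 0) : ∀ n, g n = 0 := by
  intro n
  induction n using Nat.strong_induction_on with
  | _ n ih =>
    rcases Nat.lt_or_ge n Q.natDegree with hn | hn
    · exact h0 n hn
    · set i := n - Q.natDegree with hi
      have hrel : ∑ j ∈ Finset.range (Q.natDegree + 1), Q.coeff j * g (i + j) = 0 := by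
        rw [← pact_apply]
        rw [hg]
        rfl
      rw [Finset.sum_range_succ] at hrel
      have hsum : ∑ j ∈ Finset.range Q.natDegree, Q.coeff j * g (i + j) = 0 := by
        refine Finset.sum_eq_zero fun j hj => ?_
        have hj' := Finset.mem_range.mp hj
        rw [ih (i + j) (by omega), mul_zero]
      rw [hsum, zero_add, Polynomial.Monic.coeff_natDegree hQm, one_mul] at hrel
      have : i + Q.natDegree = n := by omega
      rw [this] at hrel
      exact hrel

lemma pact_gen {L : ℕ} (B : Fin L → ℂ) (g : ℕ → ℂ) (n : ℕ) :
    pact (∑ k : Fin L, C (B k) * X ^ (k : ℕ)) g n = ∑ k : Fin L, B k * g (n + (k : ℕ)) := by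
  rw [pact, map_sum, LinearMap.coe_sum, Finset.sum_apply, Finset.sum_apply]
  refine Finset.sum_congr rfl fun k _ => ?_
  rw [map_mul, Polynomial.aeval_C, map_pow, Polynomial.aeval_X]
  show (B k) • ((Sop ^ (k : ℕ)) g) n = _
  rw [Sop_pow_apply]
  rfl

/-- A vector `B` lies in the relations space of a series of difference dimension `d`
with characteristic polynomial `Q`, `d < L ≤ N - d + 1`, iff its generating
polynomial is a multiple of `Q`. -/
theorem mem_relations_space_iff_charpoly_dvd
    (f : ℕ → ℂ) (m : ℕ) (lam : Fin m → ℂ) (P : Fin m → Polynomial ℂ)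
    (hinj : Function.Injective lam) (hne : ∀ k, lam k ≠ 0) (hP : ∀ k, P k ≠ 0)
    (hf : ∀ n : ℕ, f n = ∑ k, (P k).eval (n : ℂ) * lam k ^ n)
    (Q : Polynomial ℂ) (hQ : Q = ∏ k, (X - C (lam k)) ^ ((P k).natDegree + 1))
    (d : ℕ) (hd : d = Q.natDegree)
    (N L : ℕ) (hdN : 2 * d ≤ N) (hdL : d < L) (hLN : L + d ≤ N + 1)
    (B : Fin L → ℂ) :
    inRelSpace f N L B ↔ Q ∣ ∑ k : Fin L, C (B k) * X ^ (k : ℕ) := by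
  classical
  set Bp : Polynomial ℂ := ∑ k : Fin L, C (B k) * X ^ (k : ℕ) with hBp
  have hQm : Q.Monic := by
    rw [hQ]
    exact monic_prod_of_monic _ _ fun k _ => (monic_X_sub_C _).pow _
  have hfsum : f = ∑ k, expP (P k) (lam k) := by
    funext n
    rw [hf n, Finset.sum_apply]
    rfl
  have hfQ : pact Q f = 0 := by
    rw [hfsum, map_sum]
    refine Finset.sum_eq_zero fun k _ => ?_
    have hsplit : (∏ x ∈ Finset.univ.erase k, (X - C (lam x)) ^ ((P x).natDegree + 1)) *
        (X - C (lam k)) ^ ((P k).natDegree + 1) = Q := by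
      rw [hQ]
      exact Finset.prod_erase_mul _ _ (Finset.mem_univ k)
    rw [← hsplit, pact_mul_apply, annihilate (lam k) _ (P k) le_rfl, map_zero]
  -- pointwise sums and relation space
  have hhin : ∀ i : ℕ, hinner (fun j : Fin L => f (i + (j : ℕ)))
      (fun j => (starRingEnd ℂ) (B j)) = (starRingEnd ℂ) (pact Bp f i) := by
    intro i
    rw [hinner, pact_gen, map_sum]
    refine Finset.sum_congr rfl fun j _ => ?_
    rw [map_mul]
    ring
  constructor
  · -- relations → divisibility
    intro hrel
    have hpoint : ∀ i : ℕ, i + L ≤ N → pact Bp f i = 0 := by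
      intro i hi
      have hmem : (fun j : Fin L => f (i + (j : ℕ))) ∈ trajSpace f N L :=
        Submodule.subset_span ⟨i, hi, rfl⟩
      have := hrel _ hmem
      rw [hhin i] at this
      simpa using this
    have hBf : pact Bp f = 0 := by
      funext n
      refine vanish_of_monic_ann hQm ?_ ?_ n
      · have : pact Q (pact Bp f) = pact Bp (pact Q f) := by
          rw [← pact_mul_apply, ← pact_mul_apply, mul_comm]
        rw [this, hfQ, map_zero]
      · intro i hi
        exact hpoint i (by omega)
    -- componentwise
    have hcomp : ∀ k, pact Bp (expP (P k) (lam k)) = 0 := by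
      have hr : ∀ k, Tr (lam k) Bp (P k) = 0 := by
        apply exp_unique lam hinj hne
        intro n
        have h0 : pact Bp f n = 0 := by rw [hBf]; rfl
        rw [hfsum, map_sum, Finset.sum_apply] at h0
        simp only [pact_exp, expP] at h0
        exact h0
      intro k
      rw [pact_exp, hr k, expP_zero]
    have hdvd : ∀ k, (X - C (lam k)) ^ ((P k).natDegree + 1) ∣ Bp := fun k =>
      dvd_of_pact_exp_zero (hne k) _ (P k) Bp (hP k) rfl (hcomp k)
    rw [hQ]
    refine Finset.prod_dvd_of_coprime ?_ fun k _ => hdvd k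
    intro a _ b _ hab
    exact ((Polynomial.pairwise_coprime_X_sub_C hinj hab).pow)
  · -- divisibility → relations
    rintro ⟨A, hA⟩
    have hBf : pact Bp f = 0 := by
      rw [hA, mul_comm, pact_mul_apply, hfQ, map_zero]
    intro u hu
    induction hu using Submodule.span_induction with
    | mem x hx =>
      obtain ⟨i, hi, rfl⟩ := hx
      rw [hhin i, hBf]
      simp
    | zero => simp [hinner]
    | add x y hx hy ihx ihy =>
      rw [hinner] at *
      simp only [Pi.add_apply, map_add, add_mul, Finset.sum_add_distrib, ihx, ihy, add_zero]
    | smul a x hx ihx =>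
      rw [hinner] at *
      simp only [Pi.smul_apply, smul_eq_mul, map_mul, mul_assoc, ← Finset.mul_sum, ihx, mul_zero]
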